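/- Let M be the double star block matrix with xᵀy = 0 = zᵀw and a, b ≠ 0, and suppose p := bb̄ + z*z ≠ 0 and q := aā + x*x ≠ 0. Then X = [[0, b̄(ap)⁻¹xᵀ, b̄p⁻¹, 0],[q⁻¹x̄, 0, 0, (bq)⁻¹x̄zᵀ],[āq⁻¹, 0, 0, ā(bq)⁻¹zᵀ],[0, (ap)⁻¹z̄xᵀ, p⁻¹z̄, 0]] is the dual core EP inverse of M: it satisfies M³X = M², X²M = X, and (XM)* = XM. -/

import Mathlib

open Matrix BigOperators

noncomputable section

abbrev Idx (m n : ℕ) := (Unit ⊕ Fin m) ⊕ (Unit ⊕ Fin n)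

/-- 4×4 block builder for matrices indexed by a double star digraph vertex set:
the blocks correspond to the first center, the first star's leaves, the second
center and the second star's leaves, in this order. -/
def blk {m n : ℕ}
    (A11 : ℂ) (A12 : Fin m → ℂ) (A13 : ℂ) (A14 : Fin n → ℂ)
    (A21 : Fin m → ℂ) (A22 : Fin m → Fin m → ℂ) (A23 : Fin m → ℂ) (A24 : Fin m → Fin n → ℂ)
    (A31 : ℂ) (A32 : Fin m → ℂ) (A33 : ℂ) (A34 : Fin n → ℂ)
    (A41 : Fin n → ℂ) (A42 : Fin n → Fin m → ℂ) (A43 : Fin n → ℂ) (A44 : Fin n → Fin n → ℂ) :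
    Matrix (Idx m n) (Idx m n) ℂ :=
  Matrix.of fun i j =>
    match i, j with
    | .inl (.inl _), .inl (.inl _) => A11
    | .inl (.inl _), .inl (.inr k) => A12 k
    | .inl (.inl _), .inr (.inl _) => A13
    | .inl (.inl _), .inr (.inr k) => A14 k
    | .inl (.inr i'), .inl (.inl _) => A21 i'
    | .inl (.inr i'), .inl (.inr k) => A22 i' k
    | .inl (.inr i'), .inr (.inl _) => A23 i'
    | .inl (.inr i'), .inr (.inr k) => A24 i' k
    | .inr (.inl _), .inl (.inl _) => A31
    | .inr (.inl _), .inl (.inr k) => A32 k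
    | .inr (.inl _), .inr (.inl _) => A33
    | .inr (.inl _), .inr (.inr k) => A34 k
    | .inr (.inr i'), .inl (.inl _) => A41 i'
    | .inr (.inr i'), .inl (.inr k) => A42 i' k
    | .inr (.inr i'), .inr (.inl _) => A43 i'
    | .inr (.inr i'), .inr (.inr k) => A44 i' k

/-- The canonical matrix `[[0, xᵀ, a, 0],[y, 0, 0, 0],[b, 0, 0, zᵀ],[0, 0, w, 0]]`
associated with a double star digraph. -/
def dsM {m n : ℕ} (a b : ℂ) (x y : Fin m → ℂ) (z w : Fin n → ℂ) :
    Matrix (Idx m n) (Idx m n) ℂ :=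
  blk 0 x a (fun _ => 0)
      y (fun _ _ => 0) (fun _ => 0) (fun _ _ => 0)
      b (fun _ => 0) 0 z
      (fun _ => 0) (fun _ _ => 0) w (fun _ _ => 0)

/-- `xᵀy`. -/
def dotT {k : ℕ} (x y : Fin k → ℂ) : ℂ := ∑ i, x i * y i

/-- `x*x = ∑ conj xᵢ · xᵢ`. -/
def gram {k : ℕ} (x : Fin k → ℂ) : ℂ := ∑ i, star (x i) * x i

end


section Aux

open Finset in
private lemma L0 {k : ℕ} (c : ℂ) (f g : Fin k → ℂ) :
    ∑ i, (c * f i) * g i = c * ∑ i, f i * g i := by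
  rw [Finset.mul_sum]; exact Finset.sum_congr rfl fun i _ => by ring

private lemma L3 {k : ℕ} (d : ℂ) (f g : Fin k → ℂ) :
    ∑ i, f i * (d * g i) = d * ∑ i, f i * g i := by
  rw [Finset.mul_sum]; exact Finset.sum_congr rfl fun i _ => by ring

private lemma L4 {k : ℕ} (d e : ℂ) (f g : Fin k → ℂ) :
    ∑ i, f i * (d * g i * e) = d * e * ∑ i, f i * g i := by
  rw [Finset.mul_sum]; exact Finset.sum_congr rfl fun i _ => by ring

set_option maxHeartbeats 2000000 in
private lemma blk_mul {m n : ℕ}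
    (A11 : ℂ) (A12 : Fin m → ℂ) (A13 : ℂ) (A14 : Fin n → ℂ)
    (A21 : Fin m → ℂ) (A22 : Fin m → Fin m → ℂ) (A23 : Fin m → ℂ) (A24 : Fin m → Fin n → ℂ)
    (A31 : ℂ) (A32 : Fin m → ℂ) (A33 : ℂ) (A34 : Fin n → ℂ)
    (A41 : Fin n → ℂ) (A42 : Fin n → Fin m → ℂ) (A43 : Fin n → ℂ) (A44 : Fin n → Fin n → ℂ)
    (B11 : ℂ) (B12 : Fin m → ℂ) (B13 : ℂ) (B14 : Fin n → ℂ)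
    (B21 : Fin m → ℂ) (B22 : Fin m → Fin m → ℂ) (B23 : Fin m → ℂ) (B24 : Fin m → Fin n → ℂ)
    (B31 : ℂ) (B32 : Fin m → ℂ) (B33 : ℂ) (B34 : Fin n → ℂ)
    (B41 : Fin n → ℂ) (B42 : Fin n → Fin m → ℂ) (B43 : Fin n → ℂ) (B44 : Fin n → Fin n → ℂ) :
    blk A11 A12 A13 A14 A21 A22 A23 A24 A31 A32 A33 A34 A41 A42 A43 A44 *
      blk B11 B12 B13 B14 B21 B22 B23 B24 B31 B32 B33 B34 B41 B42 B43 B44 =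
    blk (A11*B11 + (∑ k, A12 k * B21 k) + A13*B31 + (∑ k, A14 k * B41 k))
        (fun j => A11*B12 j + (∑ k, A12 k * B22 k j) + A13*B32 j + (∑ k, A14 k * B42 k j))
        (A11*B13 + (∑ k, A12 k * B23 k) + A13*B33 + (∑ k, A14 k * B43 k))
        (fun j => A11*B14 j + (∑ k, A12 k * B24 k j) + A13*B34 j + (∑ k, A14 k * B44 k j))
        (fun i => A21 i*B11 + (∑ k, A22 i k * B21 k) + A23 i*B31 + (∑ k, A24 i k * B41 k))
        (fun i j => A21 i*B12 j + (∑ k, A22 i k * B22 k j) + A23 i*B32 j + (∑ k, A24 i k * B42 k j))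
        (fun i => A21 i*B13 + (∑ k, A22 i k * B23 k) + A23 i*B33 + (∑ k, A24 i k * B43 k))
        (fun i j => A21 i*B14 j + (∑ k, A22 i k * B24 k j) + A23 i*B34 j + (∑ k, A24 i k * B44 k j))
        (A31*B11 + (∑ k, A32 k * B21 k) + A33*B31 + (∑ k, A34 k * B41 k))
        (fun j => A31*B12 j + (∑ k, A32 k * B22 k j) + A33*B32 j + (∑ k, A34 k * B42 k j))
        (A31*B13 + (∑ k, A32 k * B23 k) + A33*B33 + (∑ k, A34 k * B43 k))
        (fun j => A31*B14 j + (∑ k, A32 k * B24 k j) + A33*B34 j + (∑ k, A34 k * B44 k j))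
        (fun i => A41 i*B11 + (∑ k, A42 i k * B21 k) + A43 i*B31 + (∑ k, A44 i k * B41 k))
        (fun i j => A41 i*B12 j + (∑ k, A42 i k * B22 k j) + A43 i*B32 j + (∑ k, A44 i k * B42 k j))
        (fun i => A41 i*B13 + (∑ k, A42 i k * B23 k) + A43 i*B33 + (∑ k, A44 i k * B43 k))
        (fun i j => A41 i*B14 j + (∑ k, A42 i k * B24 k j) + A43 i*B34 j + (∑ k, A44 i k * B44 k j)) := by
  ext i j
  rcases i with (i|i)|(i|i) <;> rcases j with (j|j)|(j|j) <;>
    simp [blk, Matrix.mul_apply, Fintype.sum_sum_type, add_assoc]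

set_option maxHeartbeats 2000000 in
private lemma blk_conjT {m n : ℕ}
    (A11 : ℂ) (A12 : Fin m → ℂ) (A13 : ℂ) (A14 : Fin n → ℂ)
    (A21 : Fin m → ℂ) (A22 : Fin m → Fin m → ℂ) (A23 : Fin m → ℂ) (A24 : Fin m → Fin n → ℂ)
    (A31 : ℂ) (A32 : Fin m → ℂ) (A33 : ℂ) (A34 : Fin n → ℂ)
    (A41 : Fin n → ℂ) (A42 : Fin n → Fin m → ℂ) (A43 : Fin n → ℂ) (A44 : Fin n → Fin n → ℂ) :
    (blk A11 A12 A13 A14 A21 A22 A23 A24 A31 A32 A33 A34 A41 A42 A43 A44)ᴴ =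
    blk (star A11) (fun j => star (A21 j)) (star A31) (fun j => star (A41 j))
        (fun i => star (A12 i)) (fun i j => star (A22 j i)) (fun i => star (A32 i))
          (fun i j => star (A42 j i))
        (star A13) (fun j => star (A23 j)) (star A33) (fun j => star (A43 j))
        (fun i => star (A14 i)) (fun i j => star (A24 j i)) (fun i => star (A34 i))
          (fun i j => star (A44 j i)) := by
  ext i j
  rcases i with (i|i)|(i|i) <;> rcases j with (j|j)|(j|j) <;>
    simp [blk, Matrix.conjTranspose_apply]

end Aux

set_option maxHeartbeats 4000000 in
private lemma dsM_key {m n : ℕ} (a b : ℂ) (ha : a ≠ 0) (hb : b ≠ 0)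
    (x y : Fin m → ℂ) (z w : Fin n → ℂ)
    (hxy : dotT x y = 0) (hzw : dotT z w = 0)
    (hp : b * star b + gram z ≠ 0) (hq : a * star a + gram x ≠ 0) :
    dsM a b x y z w ^ 3 *
      (blk 0 (fun j => star b * (a * (b * star b + gram z))⁻¹ * x j)
        (star b * (b * star b + gram z)⁻¹) (fun _ => 0)
        (fun i => (a * star a + gram x)⁻¹ * star (x i)) (fun _ _ => 0) (fun _ => 0)
          (fun i j => (b * (a * star a + gram x))⁻¹ * star (x i) * z j)
        (star a * (a * star a + gram x)⁻¹) (fun _ => 0) 0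
          (fun j => star a * (b * (a * star a + gram x))⁻¹ * z j)
        (fun _ => 0) (fun i j => (a * (b * star b + gram z))⁻¹ * star (z i) * x j)
          (fun i => (b * star b + gram z)⁻¹ * star (z i)) (fun _ _ => 0)) =
      dsM a b x y z w ^ 2 ∧
    (blk 0 (fun j => star b * (a * (b * star b + gram z))⁻¹ * x j)
        (star b * (b * star b + gram z)⁻¹) (fun _ => 0)
        (fun i => (a * star a + gram x)⁻¹ * star (x i)) (fun _ _ => 0) (fun _ => 0)
          (fun i j => (b * (a * star a + gram x))⁻¹ * star (x i) * z j)
        (star a * (a * star a + gram x)⁻¹) (fun _ => 0) 0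
          (fun j => star a * (b * (a * star a + gram x))⁻¹ * z j)
        (fun _ => 0) (fun i j => (a * (b * star b + gram z))⁻¹ * star (z i) * x j)
          (fun i => (b * star b + gram z)⁻¹ * star (z i)) (fun _ _ => 0)) ^ 2 *
      dsM a b x y z w =
      (blk 0 (fun j => star b * (a * (b * star b + gram z))⁻¹ * x j)
        (star b * (b * star b + gram z)⁻¹) (fun _ => 0)
        (fun i => (a * star a + gram x)⁻¹ * star (x i)) (fun _ _ => 0) (fun _ => 0)
          (fun i j => (b * (a * star a + gram x))⁻¹ * star (x i) * z j)
        (star a * (a * star a + gram x)⁻¹) (fun _ => 0) 0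
          (fun j => star a * (b * (a * star a + gram x))⁻¹ * z j)
        (fun _ => 0) (fun i j => (a * (b * star b + gram z))⁻¹ * star (z i) * x j)
          (fun i => (b * star b + gram z)⁻¹ * star (z i)) (fun _ _ => 0)) ∧
    ((blk 0 (fun j => star b * (a * (b * star b + gram z))⁻¹ * x j)
        (star b * (b * star b + gram z)⁻¹) (fun _ => 0)
        (fun i => (a * star a + gram x)⁻¹ * star (x i)) (fun _ _ => 0) (fun _ => 0)
          (fun i j => (b * (a * star a + gram x))⁻¹ * star (x i) * z j)
        (star a * (a * star a + gram x)⁻¹) (fun _ => 0) 0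
          (fun j => star a * (b * (a * star a + gram x))⁻¹ * z j)
        (fun _ => 0) (fun i j => (a * (b * star b + gram z))⁻¹ * star (z i) * x j)
          (fun i => (b * star b + gram z)⁻¹ * star (z i)) (fun _ _ => 0)) *
      dsM a b x y z w)ᴴ =
      (blk 0 (fun j => star b * (a * (b * star b + gram z))⁻¹ * x j)
        (star b * (b * star b + gram z)⁻¹) (fun _ => 0)
        (fun i => (a * star a + gram x)⁻¹ * star (x i)) (fun _ _ => 0) (fun _ => 0)
          (fun i j => (b * (a * star a + gram x))⁻¹ * star (x i) * z j)
        (star a * (a * star a + gram x)⁻¹) (fun _ => 0) 0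
          (fun j => star a * (b * (a * star a + gram x))⁻¹ * z j)
        (fun _ => 0) (fun i j => (a * (b * star b + gram z))⁻¹ * star (z i) * x j)
          (fun i => (b * star b + gram z)⁻¹ * star (z i)) (fun _ _ => 0)) *
      dsM a b x y z w := by
  have hxy' : (∑ k, x k * y k) = 0 := hxy
  have hzw' : (∑ k, z k * w k) = 0 := hzw
  have hxs : (∑ k, x k * star (x k)) = gram x := by
    rw [_root_.gram]; exact Finset.sum_congr rfl fun _ _ => mul_comm _ _
  have hzs : (∑ k, z k * star (z k)) = gram z := by
    rw [_root_.gram]; exact Finset.sum_congr rfl fun _ _ => mul_comm _ _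
  have hps : star (b * star b + gram z) = b * star b + gram z := by
    simp [_root_.gram, star_sum, mul_comm]
  have hqs : star (a * star a + gram x) = a * star a + gram x := by
    simp [_root_.gram, star_sum, mul_comm]
  have hp2 : b * (starRingEnd ℂ) b + gram z ≠ 0 := hp
  have hq2 : a * (starRingEnd ℂ) a + gram x ≠ 0 := hq
  have hM2 : dsM a b x y z w * dsM a b x y z w =
      blk (a*b) (fun _ => 0) 0 (fun j => a * z j)
          (fun _ => 0) (fun i j => y i * x j) (fun i => a * y i) (fun _ _ => 0)
          0 (fun j => b * x j) (a*b) (fun _ => 0)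
          (fun i => b * w i) (fun _ _ => 0) (fun _ => 0) (fun i j => w i * z j) := by
    simp only [dsM]
    rw [blk_mul]
    refine Matrix.ext fun i j => ?_
    rcases i with (i|i)|(i|i) <;> rcases j with (j|j)|(j|j) <;>
      (try simp only [blk, Matrix.of_apply, L0, L3, L4, mul_zero, zero_mul, add_zero, zero_add,
        mul_one, one_mul, Finset.sum_const_zero, mul_inv, hxy', hzw', hxs, hzs])
    all_goals try rfl
    all_goals try ring1
    all_goals try field_simp [ha, hb, hp2, hq2]
    all_goals ring1
  have hM3 : dsM a b x y z w * dsM a b x y z w * dsM a b x y z w =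
      blk 0 (fun j => a*b*x j) (a^2*b) (fun _ => 0)
          (fun i => a*b*y i) (fun _ _ => 0) (fun _ => 0) (fun i j => a*y i*z j)
          (a*b^2) (fun _ => 0) 0 (fun j => a*b*z j)
          (fun _ => 0) (fun i j => b*w i*x j) (fun i => a*b*w i) (fun _ _ => 0) := by
    rw [hM2]
    simp only [dsM]
    rw [blk_mul]
    refine Matrix.ext fun i j => ?_
    rcases i with (i|i)|(i|i) <;> rcases j with (j|j)|(j|j) <;>
      (try simp only [blk, Matrix.of_apply, L0, L3, L4, mul_zero, zero_mul, add_zero, zero_add,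
        mul_one, one_mul, Finset.sum_const_zero, mul_inv, hxy', hzw', hxs, hzs])
    all_goals try rfl
    all_goals try ring1
    all_goals try field_simp [ha, hb, hp2, hq2]
    all_goals ring1
  have hXM : (blk 0 (fun j => star b * (a * (b * star b + gram z))⁻¹ * x j)
        (star b * (b * star b + gram z)⁻¹) (fun _ => 0)
        (fun i => (a * star a + gram x)⁻¹ * star (x i)) (fun _ _ => 0) (fun _ => 0)
          (fun i j => (b * (a * star a + gram x))⁻¹ * star (x i) * z j)
        (star a * (a * star a + gram x)⁻¹) (fun _ => 0) 0
          (fun j => star a * (b * (a * star a + gram x))⁻¹ * z j)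
        (fun _ => 0) (fun i j => (a * (b * star b + gram z))⁻¹ * star (z i) * x j)
          (fun i => (b * star b + gram z)⁻¹ * star (z i)) (fun _ _ => 0)) *
      dsM a b x y z w =
      blk (b * star b * (b * star b + gram z)⁻¹) (fun _ => 0) 0
          (fun j => star b * (b * star b + gram z)⁻¹ * z j)
          (fun _ => 0) (fun i j => (a * star a + gram x)⁻¹ * star (x i) * x j)
          (fun i => a * (a * star a + gram x)⁻¹ * star (x i)) (fun _ _ => 0)
          0 (fun j => star a * (a * star a + gram x)⁻¹ * x j)
          (a * star a * (a * star a + gram x)⁻¹) (fun _ => 0)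
          (fun i => b * (b * star b + gram z)⁻¹ * star (z i)) (fun _ _ => 0) (fun _ => 0)
          (fun i j => (b * star b + gram z)⁻¹ * star (z i) * z j) := by
    simp only [dsM]
    rw [blk_mul]
    refine Matrix.ext fun i j => ?_
    rcases i with (i|i)|(i|i) <;> rcases j with (j|j)|(j|j) <;>
      (try simp only [blk, Matrix.of_apply, L0, L3, L4, mul_zero, zero_mul, add_zero, zero_add,
        mul_one, one_mul, Finset.sum_const_zero, mul_inv, hxy', hzw', hxs, hzs])
    all_goals try rfl
    all_goals try ring1
    all_goals try field_simp [ha, hb, hp2, hq2]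
    all_goals ring1
  refine ⟨?_, ?_, ?_⟩
  · have e3 : dsM a b x y z w ^ 3 = dsM a b x y z w * dsM a b x y z w * dsM a b x y z w := by
      rw [pow_succ, pow_two]
    have e2 : dsM a b x y z w ^ 2 = dsM a b x y z w * dsM a b x y z w := pow_two _
    rw [e3, e2, hM3, hM2]
    rw [blk_mul]
    refine Matrix.ext fun i j => ?_
    rcases i with (i|i)|(i|i) <;> rcases j with (j|j)|(j|j) <;>
      (try simp only [blk, Matrix.of_apply, L0, L3, L4, mul_zero, zero_mul, add_zero, zero_add,
        mul_one, one_mul, Finset.sum_const_zero, mul_inv, hxy', hzw', hxs, hzs])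
    all_goals try rfl
    all_goals try ring1
    all_goals try field_simp [ha, hb, hp2, hq2]
    all_goals ring1
  · rw [pow_two, mul_assoc, hXM]
    rw [blk_mul]
    refine Matrix.ext fun i j => ?_
    rcases i with (i|i)|(i|i) <;> rcases j with (j|j)|(j|j) <;>
      (try simp only [blk, Matrix.of_apply, L0, L3, L4, mul_zero, zero_mul, add_zero, zero_add,
        mul_one, one_mul, Finset.sum_const_zero, mul_inv, hxy', hzw', hxs, hzs])
    all_goals try rfl
    all_goals try ring1
    all_goals (
      set P := b * star b + gram z with hP
      set Q := a * star a + gram x with hQ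
      try rw [show gram z = P - b * star b from by rw [hP]; ring]
      try rw [show gram x = Q - a * star a from by rw [hQ]; ring]
      field_simp [ha, hb, hp, hq]
      try ring1
      try ring_nf)
  · rw [hXM, blk_conjT]
    refine Matrix.ext fun i j => ?_
    rcases i with (i|i)|(i|i) <;> rcases j with (j|j)|(j|j) <;>
      (try simp only [blk, Matrix.of_apply, star_mul', star_add, star_star, star_inv₀, hps, hqs,
        star_zero])
    all_goals try rfl
    all_goals ring

theorem dsM_dualCoreEP_caseI {m n : ℕ} (a b : ℂ) (ha : a ≠ 0) (hb : b ≠ 0)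
    (x y : Fin m → ℂ) (z w : Fin n → ℂ)
    (hxy : dotT x y = 0) (hzw : dotT z w = 0)
    (hp : b * star b + gram z ≠ 0) (hq : a * star a + gram x ≠ 0) :
    letI M := dsM a b x y z w
    letI p := b * star b + gram z
    letI q := a * star a + gram x
    letI X := blk 0 (fun j => star b * (a * p)⁻¹ * x j) (star b * p⁻¹) (fun _ => 0)
        (fun i => q⁻¹ * star (x i)) (fun _ _ => 0) (fun _ => 0)
          (fun i j => (b * q)⁻¹ * star (x i) * z j)
        (star a * q⁻¹) (fun _ => 0) 0 (fun j => star a * (b * q)⁻¹ * z j)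
        (fun _ => 0) (fun i j => (a * p)⁻¹ * star (z i) * x j)
          (fun i => p⁻¹ * star (z i)) (fun _ _ => 0)
    M ^ 3 * X = M ^ 2 ∧ X ^ 2 * M = X ∧ (X * M)ᴴ = X * M := by
  exact dsM_key a b ha hb x y z w hxy hzw hp hq
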